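/- Let T be the triple intersection form of M_3^{(dP_8)^3}. Set Γ_B = D_6, Γ_1 = D_7, Γ_2 = D_8, Γ_3 = D_9, and Γ_0 = 3(3D_5 + D_6 + 3D_7 + 3D_8) = 9D_5 + 3D_6 + 9D_7 + 9D_8. Then T is diagonal in the basis Γ_0, Γ_B, Γ_1, Γ_2, Γ_3: T(Γ_0,Γ_0,Γ_0) = 243, T(Γ_B,Γ_B,Γ_B) = 9, T(Γ_i,Γ_i,Γ_i) = 1 for i = 1, 2, 3, and T(X,Y,Z) = 0 whenever X, Y, Z ∈ {Γ_0, Γ_B, Γ_1, Γ_2, Γ_3} are not all equal. -/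

import Mathlib

namespace Stmt17

/-- The real vector space with basis `D₅, D₆, D₇, D₈, D₉` (indexed `0, 1, 2, 3, 4`). -/
abbrev V := Fin 5 → ℝ

/-- The basis vector `D_{i+5}` (`i : Fin 5` zero-based: `D 0 = D₅, …, D 4 = D₉`). -/
def D (i : Fin 5) : V := Pi.single i 1

/-- The triple intersection numbers of `M₃^{(dP₈)³}` on basis triples, symmetric in
the three indices: the only nonzero values, up to permutation, are
`D₅³ = −2, D₆³ = 9, D₇³ = 1, D₈³ = 1, D₉³ = 1, D₅²D₆ = 1, D₅D₆² = −3, D₅²D₇ = 1,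
D₅D₇² = −1, D₅²D₈ = 1, D₅D₈² = −1`. -/
def c (i j k : Fin 5) : ℝ :=
  if ({i, j, k} : Multiset (Fin 5)) = {0, 0, 0} then -2
  else if ({i, j, k} : Multiset (Fin 5)) = {1, 1, 1} then 9
  else if ({i, j, k} : Multiset (Fin 5)) = {2, 2, 2} then 1
  else if ({i, j, k} : Multiset (Fin 5)) = {3, 3, 3} then 1
  else if ({i, j, k} : Multiset (Fin 5)) = {4, 4, 4} then 1
  else if ({i, j, k} : Multiset (Fin 5)) = {0, 0, 1} then 1
  else if ({i, j, k} : Multiset (Fin 5)) = {0, 1, 1} then -3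
  else if ({i, j, k} : Multiset (Fin 5)) = {0, 0, 2} then 1
  else if ({i, j, k} : Multiset (Fin 5)) = {0, 2, 2} then -1
  else if ({i, j, k} : Multiset (Fin 5)) = {0, 0, 3} then 1
  else if ({i, j, k} : Multiset (Fin 5)) = {0, 3, 3} then -1
  else 0

/-- `Γ_B = D₆`. -/
def ΓB : V := D 1
/-- `Γ₁ = D₇`. -/
def Γ1 : V := D 2
/-- `Γ₂ = D₈`. -/
def Γ2 : V := D 3
/-- `Γ₃ = D₉`. -/
def Γ3 : V := D 4
/-- `Γ₀ = 3(3D₅ + D₆ + 3D₇ + 3D₈) = 9D₅ + 3D₆ + 9D₇ + 9D₈`. -/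
def Γ0 : V := (9 : ℝ) • D 0 + (3 : ℝ) • D 1 + (9 : ℝ) • D 2 + (9 : ℝ) • D 3

section Aux
variable (T : MultilinearMap ℝ (fun _ : Fin 3 => V) ℝ)

lemma upd0 (x y z w : V) : Function.update ![x,y,z] 0 w = ![w,y,z] := by
  funext i; fin_cases i <;> simp [Function.update]
lemma upd1 (x y z w : V) : Function.update ![x,y,z] 1 w = ![x,w,z] := by
  funext i; fin_cases i <;> simp [Function.update]
lemma upd2 (x y z w : V) : Function.update ![x,y,z] 2 w = ![x,y,w] := by
  funext i; fin_cases i <;> simp [Function.update]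

lemma add0 (a b y z : V) : T ![a+b,y,z] = T ![a,y,z] + T ![b,y,z] := by
  have := T.map_update_add ![a,y,z] 0 a b
  simpa [upd0] using this
lemma add1 (x a b z : V) : T ![x,a+b,z] = T ![x,a,z] + T ![x,b,z] := by
  have := T.map_update_add ![x,a,z] 1 a b
  simpa [upd1] using this
lemma add2 (x y a b : V) : T ![x,y,a+b] = T ![x,y,a] + T ![x,y,b] := by
  have := T.map_update_add ![x,y,a] 2 a b
  simpa [upd2] using this
lemma smul0 (r : ℝ) (a y z : V) : T ![r • a,y,z] = r * T ![a,y,z] := by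
  have := T.map_update_smul ![a,y,z] 0 r a
  simpa [upd0] using this
lemma smul1 (r : ℝ) (x a z : V) : T ![x,r • a,z] = r * T ![x,a,z] := by
  have := T.map_update_smul ![x,a,z] 1 r a
  simpa [upd1] using this
lemma smul2 (r : ℝ) (x y a : V) : T ![x,y,r • a] = r * T ![x,y,a] := by
  have := T.map_update_smul ![x,y,a] 2 r a
  simpa [upd2] using this

lemma zero0 (y z : V) : T ![0,y,z] = 0 := T.map_coord_zero 0 (by simp)
lemma zero1 (x z : V) : T ![x,0,z] = 0 := T.map_coord_zero 1 (by simp)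
lemma zero2 (x y : V) : T ![x,y,0] = 0 := T.map_coord_zero 2 (by simp)

lemma sum0 (s : Finset (Fin 5)) (f : Fin 5 → V) (y z : V) :
    T ![∑ i ∈ s, f i, y, z] = ∑ i ∈ s, T ![f i, y, z] := by
  induction s using Finset.induction with
  | empty => simp [zero0]
  | insert a s h ih => rw [Finset.sum_insert h, add0, ih, Finset.sum_insert h]
lemma sum1 (s : Finset (Fin 5)) (x : V) (f : Fin 5 → V) (z : V) :
    T ![x, ∑ i ∈ s, f i, z] = ∑ i ∈ s, T ![x, f i, z] := by
  induction s using Finset.induction with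
  | empty => simp [zero1]
  | insert a s h ih => rw [Finset.sum_insert h, add1, ih, Finset.sum_insert h]
lemma sum2 (s : Finset (Fin 5)) (x y : V) (f : Fin 5 → V) :
    T ![x, y, ∑ i ∈ s, f i] = ∑ i ∈ s, T ![x, y, f i] := by
  induction s using Finset.induction with
  | empty => simp [zero2]
  | insert a s h ih => rw [Finset.sum_insert h, add2, ih, Finset.sum_insert h]

lemma hrep (w : V) : w = ∑ i, w i • D i := by
  funext j
  simp [D, Pi.single_apply, Finset.sum_apply]

lemma texp (x y z : V) :
    T ![x,y,z] = ∑ i, ∑ j, ∑ k, x i * y j * z k * T ![D i, D j, D k] := by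
  conv_lhs => rw [hrep x, sum0]
  refine Finset.sum_congr rfl fun i _ => ?_
  rw [smul0]
  conv_lhs => rw [hrep y, sum1]
  rw [Finset.mul_sum]
  refine Finset.sum_congr rfl fun j _ => ?_
  rw [smul1]
  conv_lhs => rw [hrep z, sum2]
  rw [Finset.mul_sum, Finset.mul_sum]
  refine Finset.sum_congr rfl fun k _ => ?_
  rw [smul2]; ring

set_option maxHeartbeats 2000000 in
lemma texp2 (hv : ∀ i j k : Fin 5, T ![D i, D j, D k] = c i j k) (x y z : V) :
    T ![x,y,z] =
    -2*(x 0*y 0*z 0) + 9*(x 1*y 1*z 1) + x 2*y 2*z 2 + x 3*y 3*z 3 + x 4*y 4*z 4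
    + (x 0*y 0*z 1 + x 0*y 1*z 0 + x 1*y 0*z 0)
    - 3*(x 0*y 1*z 1 + x 1*y 0*z 1 + x 1*y 1*z 0)
    + (x 0*y 0*z 2 + x 0*y 2*z 0 + x 2*y 0*z 0)
    - (x 0*y 2*z 2 + x 2*y 0*z 2 + x 2*y 2*z 0)
    + (x 0*y 0*z 3 + x 0*y 3*z 0 + x 3*y 0*z 0)
    - (x 0*y 3*z 3 + x 3*y 0*z 3 + x 3*y 3*z 0) := by
  rw [texp]
  simp only [Fin.sum_univ_five, hv]
  simp (config := { decide := true }) only [c, if_true, if_false, ite_true, ite_false]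
  ring

end Aux

/-- The list of basis vectors `Γ₀, Γ_B, Γ₁, Γ₂, Γ₃`. -/
def g : Fin 5 → V := ![Γ0, ΓB, Γ1, Γ2, Γ3]

/-- Coordinates of `g a` in the `D` basis. -/
def coef : Fin 5 → Fin 5 → ℝ := fun a i =>
  if a = 0 then
    (if i = 0 then 9 else if i = 1 then 3 else if i = 2 then 9 else if i = 3 then 9 else 0)
  else if a = i then 1 else 0

lemma fm0 (h : 0 < 5) : (⟨0, h⟩ : Fin 5) = 0 := rfl
lemma fm1 (h : 1 < 5) : (⟨1, h⟩ : Fin 5) = 1 := rfl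
lemma fm2 (h : 2 < 5) : (⟨2, h⟩ : Fin 5) = 2 := rfl
lemma fm3 (h : 3 < 5) : (⟨3, h⟩ : Fin 5) = 3 := rfl
lemma fm4 (h : 4 < 5) : (⟨4, h⟩ : Fin 5) = 4 := rfl
lemma gr0 : g 0 = Γ0 := rfl
lemma gr1 : g 1 = ΓB := rfl
lemma gr2 : g 2 = Γ1 := rfl
lemma gr3 : g 3 = Γ2 := rfl
lemma gr4 : g 4 = Γ3 := rfl

lemma gcoef (a i : Fin 5) : g a i = coef a i := by
  fin_cases a <;> fin_cases i <;>
    simp only [fm0, fm1, fm2, fm3, fm4, gr0, gr1, gr2, gr3, gr4] <;>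
    simp (config := { decide := true }) [coef, Γ0, ΓB, Γ1, Γ2, Γ3, D, Pi.single_apply] <;>
    norm_num

set_option maxHeartbeats 1000000 in
/-- The triple intersection form of `M₃^{(dP₈)³}` is diagonal in the basis
`Γ₀, Γ_B, Γ₁, Γ₂, Γ₃`: `T(Γ₀,Γ₀,Γ₀) = 243`, `T(Γ_B,Γ_B,Γ_B) = 9`,
`T(Γᵢ,Γᵢ,Γᵢ) = 1` for `i = 1, 2, 3`, and `T(X,Y,Z) = 0` whenever
`X, Y, Z ∈ {Γ₀, Γ_B, Γ₁, Γ₂, Γ₃}` are not all equal. -/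
theorem statement17 (T : MultilinearMap ℝ (fun _ : Fin 3 => V) ℝ)
    (hsymm : ∀ x y z : V, T ![x, y, z] = T ![y, x, z] ∧ T ![x, y, z] = T ![x, z, y])
    (hvals : ∀ i j k : Fin 5, T ![D i, D j, D k] = c i j k) :
    T ![Γ0, Γ0, Γ0] = 243 ∧
    T ![ΓB, ΓB, ΓB] = 9 ∧
    T ![Γ1, Γ1, Γ1] = 1 ∧
    T ![Γ2, Γ2, Γ2] = 1 ∧
    T ![Γ3, Γ3, Γ3] = 1 ∧
    (∀ X Y Z : V, X ∈ ({Γ0, ΓB, Γ1, Γ2, Γ3} : Set V) →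
      Y ∈ ({Γ0, ΓB, Γ1, Γ2, Γ3} : Set V) → Z ∈ ({Γ0, ΓB, Γ1, Γ2, Γ3} : Set V) →
      ¬(X = Y ∧ Y = Z) → T ![X, Y, Z] = 0) := by
  have key : ∀ a b k : Fin 5, ¬(a = b ∧ b = k) → T ![g a, g b, g k] = 0 := by
    intro a b k hne
    rw [texp2 T hvals]
    fin_cases a <;> fin_cases b <;> fin_cases k <;>
      simp only [fm0, fm1, fm2, fm3, fm4] <;>
      first
      | ((simp only [gcoef];
          simp (config := { decide := true }) only [coef, if_true, if_false, ite_true, ite_false];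
          try norm_num); done)
      | exact absurd ⟨rfl, rfl⟩ hne
  have diag : ∀ a : Fin 5, ∀ r : ℝ,
      (-2)*(coef a 0)^3 + 9*(coef a 1)^3 + (coef a 2)^3 + (coef a 3)^3 + (coef a 4)^3
      + 3*(coef a 0)^2*(coef a 1) - 9*(coef a 0)*(coef a 1)^2
      + 3*(coef a 0)^2*(coef a 2) - 3*(coef a 0)*(coef a 2)^2
      + 3*(coef a 0)^2*(coef a 3) - 3*(coef a 0)*(coef a 3)^2 = r →
      T ![g a, g a, g a] = r := by
    intro a r hr
    rw [texp2 T hvals]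
    simp only [gcoef]
    rw [← hr]; ring
  refine ⟨?_, ?_, ?_, ?_, ?_, ?_⟩
  · exact diag 0 243 (by
      simp (config := { decide := true }) only [coef, if_true, if_false, ite_true, ite_false]
      norm_num)
  · exact diag 1 9 (by
      simp (config := { decide := true }) only [coef, if_true, if_false, ite_true, ite_false]
      norm_num)
  · exact diag 2 1 (by
      simp (config := { decide := true }) only [coef, if_true, if_false, ite_true, ite_false]
      norm_num)
  · exact diag 3 1 (by
      simp (config := { decide := true }) only [coef, if_true, if_false, ite_true, ite_false]
      norm_num)
  · exact diag 4 1 (by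
      simp (config := { decide := true }) only [coef, if_true, if_false, ite_true, ite_false]
      norm_num)
  · intro X Y Z hX hY hZ hne
    have hX' : ∃ a : Fin 5, X = g a := by
      rcases hX with rfl | rfl | rfl | rfl | rfl
      exacts [⟨0, rfl⟩, ⟨1, rfl⟩, ⟨2, rfl⟩, ⟨3, rfl⟩, ⟨4, rfl⟩]
    have hY' : ∃ b : Fin 5, Y = g b := by
      rcases hY with rfl | rfl | rfl | rfl | rfl
      exacts [⟨0, rfl⟩, ⟨1, rfl⟩, ⟨2, rfl⟩, ⟨3, rfl⟩, ⟨4, rfl⟩]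
    have hZ' : ∃ k : Fin 5, Z = g k := by
      rcases hZ with rfl | rfl | rfl | rfl | rfl
      exacts [⟨0, rfl⟩, ⟨1, rfl⟩, ⟨2, rfl⟩, ⟨3, rfl⟩, ⟨4, rfl⟩]
    obtain ⟨a, rfl⟩ := hX'
    obtain ⟨b, rfl⟩ := hY'
    obtain ⟨k, rfl⟩ := hZ'
    exact key a b k fun ⟨h1, h2⟩ => hne ⟨by rw [h1], by rw [h2]⟩

end Stmt17
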